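/- arXiv:math/9809033 — 3 statements merged into one kernel-verified Lean document; each statement's English description precedes it below -/
import Mathlib

section
/- Let $G$ be a simply connected complex Lie group that embeds as a closed subgroup of $\mathrm{Aut}(\mathbb{C})^n$ (a product of $n$ copies of the affine group of $\mathbb{C}$). If $G$ is nilpotent and connected, then $G$ is commutative. -/
open Matrix Manifold

open scoped commutatorElement

section Aux

variable {G : Type*} [Group G] (A B : G → ℂ)
  (hA1 : A 1 = 1) (hB1 : B 1 = 0)
  (hAmul : ∀ g h : G, A (g * h) = A g * A h)
  (hBmul : ∀ g h : G, B (g * h) = A g * B h + B g)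

include hA1 hAmul in
lemma aux_hAinv (g : G) : A g * A g⁻¹ = 1 := by
  rw [← hAmul, mul_inv_cancel, hA1]

include hA1 hAmul in
lemma aux_hAc (g h : G) : A ⁅g, h⁆ = 1 := by
  have h1 := aux_hAinv A hA1 hAmul g
  have h2 := aux_hAinv A hA1 hAmul h
  simp only [commutatorElement_def, hAmul]
  linear_combination (A h * A h⁻¹) * h1 + h2

include hA1 hB1 hAmul hBmul in
lemma aux_hBinv (g : G) : A g * B g⁻¹ + B g = 0 := by
  rw [← hBmul, mul_inv_cancel, hB1]

include hA1 hB1 hAmul hBmul in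
lemma aux_key (g x : G) (hx : A x = 1) : B ⁅g, x⁆ = (A g - 1) * B x := by
  have h1 := aux_hAinv A hA1 hAmul g
  have h2 := aux_hBinv A B hA1 hB1 hAmul hBmul g
  have h3 := aux_hBinv A B hA1 hB1 hAmul hBmul x
  rw [hx] at h3
  have hc' : B x⁻¹ = -B x := by linear_combination h3
  simp only [commutatorElement_def, hBmul, hAmul]
  rw [hx, hc']
  linear_combination (-(B x)) * h1 + h2

include hA1 hB1 hAmul hBmul in
lemma aux1 (hnil : Group.IsNilpotent G) (a b : G) :
    ∃ n : ℕ, (A a - 1) ^ n * B ⁅a, b⁆ = 0 := by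
  obtain ⟨n, hn⟩ := Subgroup.nilpotent_iff_lowerCentralSeries.mp hnil
  set w : ℕ → G := fun k => (fun p => ⁅a, p⁆)^[k] ⁅a, b⁆ with hw
  have hwk : ∀ k, A (w k) = 1 ∧ B (w k) = (A a - 1) ^ k * B ⁅a, b⁆ ∧
      w k ∈ (⊤ : Subgroup G).lowerCentralSeries (k + 1) := by
    intro k
    induction k with
    | zero =>
      refine ⟨aux_hAc A hA1 hAmul a b, by simp [hw], ?_⟩
      rw [Subgroup.lowerCentralSeries_succ]
      exact Subgroup.commutator_mem_commutator (Subgroup.mem_top a) (Subgroup.mem_top b)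
    | succ k ih =>
      have hstep : w (k + 1) = ⁅a, w k⁆ := Function.iterate_succ_apply' _ _ _
      refine ⟨by rw [hstep]; exact aux_hAc A hA1 hAmul a (w k), ?_, ?_⟩
      · rw [hstep, aux_key A B hA1 hB1 hAmul hBmul a (w k) ih.1, ih.2.1]
        ring
      · have hmem : ⁅w k, a⁆ ∈ (⊤ : Subgroup G).lowerCentralSeries (k + 2) := by
          rw [Subgroup.lowerCentralSeries_succ]
          exact Subgroup.commutator_mem_commutator ih.2.2 (Subgroup.mem_top a)
        have heq : ⁅a, w k⁆ = ⁅w k, a⁆⁻¹ := (commutatorElement_inv _ _).symm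
        rw [hstep, heq]
        exact inv_mem hmem
  have hmemn : w n ∈ (⊤ : Subgroup G).lowerCentralSeries n :=
    Subgroup.lowerCentralSeries_antitone ⊤ (Nat.le_succ n) (hwk n).2.2
  rw [hn, Subgroup.mem_bot] at hmemn
  refine ⟨n, ?_⟩
  have := (hwk n).2.1
  rw [hmemn, hB1] at this
  exact this.symm

include hA1 hB1 hAmul hBmul in
lemma aux2 (hnil : Group.IsNilpotent G) (a b : G) : B ⁅a, b⁆ = 0 := by
  by_contra hc
  obtain ⟨n, hn⟩ := aux1 A B hA1 hB1 hAmul hBmul hnil a b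
  obtain ⟨m, hm⟩ := aux1 A B hA1 hB1 hAmul hBmul hnil b a
  have hrel : B ⁅b, a⁆ = -B ⁅a, b⁆ := by
    have h3 := aux_hBinv A B hA1 hB1 hAmul hBmul ⁅a, b⁆
    rw [aux_hAc A hA1 hAmul a b, commutatorElement_inv] at h3
    linear_combination h3
  have ha : A a = 1 := by
    rcases mul_eq_zero.mp hn with h | h
    · have := pow_eq_zero_iff'.mp h
      linear_combination this.1
    · exact absurd h hc
  have hb : A b = 1 := by
    rw [hrel] at hm
    rcases mul_eq_zero.mp hm with h | h
    · have := pow_eq_zero_iff'.mp h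
      linear_combination this.1
    · exact absurd (neg_eq_zero.mp h) hc
  have := aux_key A B hA1 hB1 hAmul hBmul a b hb
  rw [ha] at this
  simp at this
  exact hc this

end Aux

/-- Let `G` be a simply connected complex Lie group embedding as a closed subgroup of
`Aut(ℂ)ⁿ` (each factor realized as affine matrices `[[a, b], [0, 1]]` inside `GL(2, ℂ)`).
If `G` is nilpotent and connected, then `G` is commutative. -/
theorem nilpotent_simply_connected_subgroup_of_affine_power_comm
    {E : Type*} [NormedAddCommGroup E] [NormedSpace ℂ E]
    (G : Type*) [Group G] [TopologicalSpace G] [ChartedSpace E G]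
    [LieGroup 𝓘(ℂ, E) (⊤ : ℕ∞) G] [SimplyConnectedSpace G] [ConnectedSpace G]
    (hnil : Group.IsNilpotent G)
    (n : ℕ) (φ : G →* (Fin n → GL (Fin 2) ℂ))
    (hemb : Topology.IsClosedEmbedding ⇑φ)
    (haff : ∀ (g : G) (i : Fin n), (φ g i : Matrix (Fin 2) (Fin 2) ℂ) 1 0 = 0 ∧
      (φ g i : Matrix (Fin 2) (Fin 2) ℂ) 1 1 = 1) :
    ∀ a b : G, a * b = b * a := by
  intro a b
  refine hemb.injective ?_
  funext i
  set A : G → ℂ := fun g => (φ g i : Matrix (Fin 2) (Fin 2) ℂ) 0 0 with hA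
  set B : G → ℂ := fun g => (φ g i : Matrix (Fin 2) (Fin 2) ℂ) 0 1 with hB
  have hmat : ∀ g h : G, ((φ (g * h) i : Matrix (Fin 2) (Fin 2) ℂ)) =
      (φ g i : Matrix (Fin 2) (Fin 2) ℂ) * (φ h i : Matrix (Fin 2) (Fin 2) ℂ) := by
    intro g h
    rw [_root_.map_mul]
    rfl
  have hA1 : A 1 = 1 := by simp [hA, Matrix.one_apply]
  have hB1 : B 1 = 0 := by simp [hB, Matrix.one_apply]
  have hAmul : ∀ g h : G, A (g * h) = A g * A h := by
    intro g h
    simp only [hA, hmat, Matrix.mul_apply, Fin.sum_univ_two, (haff h i).1]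
    ring
  have hBmul : ∀ g h : G, B (g * h) = A g * B h + B g := by
    intro g h
    simp only [hA, hB, hmat, Matrix.mul_apply, Fin.sum_univ_two, (haff h i).2]
    ring
  have hc : B ⁅a, b⁆ = 0 := aux2 A B hA1 hB1 hAmul hBmul hnil a b
  have hac : A ⁅a, b⁆ = 1 := aux_hAc A hA1 hAmul a b
  have hone : φ ⁅a, b⁆ i = 1 := by
    ext j k
    fin_cases j <;> fin_cases k
    · simpa [Matrix.one_apply, hA] using hac
    · simpa [Matrix.one_apply, hB] using hc
    · simpa [Matrix.one_apply] using (haff ⁅a, b⁆ i).1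
    · simpa [Matrix.one_apply] using (haff ⁅a, b⁆ i).2
  have hfac : ⁅a, b⁆ * (b * a) = a * b := by group
  calc φ (a * b) i = φ (⁅a, b⁆ * (b * a)) i := by rw [hfac]
    _ = φ ⁅a, b⁆ i * φ (b * a) i := by rw [_root_.map_mul]; rfl
    _ = φ (b * a) i := by rw [hone, one_mul]
end

section
/- There is no entire holomorphic function $f : \mathbb{C} \to \mathbb{C}$ satisfying $\alpha f(\alpha y) + c \lambda m y^{m-1} = \alpha^m f(y)$ for all $y \in \mathbb{C}$, where $m \geq 2$ is an integer and $\alpha, c, \lambda$ are nonzero complex numbers with $|\alpha| < 1$. -/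
open Set in
private lemma my_iteratedDeriv_add {n : ℕ} {f g : ℂ → ℂ} (x : ℂ)
    (hf : ContDiff ℂ n f) (hg : ContDiff ℂ n g) :
    iteratedDeriv n (fun y => f y + g y) x = iteratedDeriv n f x + iteratedDeriv n g x := by
  simp_rw [← iteratedDerivWithin_univ]
  exact iteratedDerivWithin_add (mem_univ x) uniqueDiffOn_univ hf.contDiffWithinAt hg.contDiffWithinAt

open Set in
private lemma my_iteratedDeriv_cmul {n : ℕ} {f : ℂ → ℂ} (a x : ℂ) (hf : ContDiff ℂ n f) :
    iteratedDeriv n (fun y => a * f y) x = a * iteratedDeriv n f x := by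
  simp_rw [← iteratedDerivWithin_univ]
  exact iteratedDerivWithin_const_mul (mem_univ x) uniqueDiffOn_univ a hf.contDiffWithinAt

private lemma my_iteratedDeriv_pow (n : ℕ) (x : ℂ) :
    iteratedDeriv n (fun y : ℂ => y ^ n) x = Nat.factorial n := by
  induction n generalizing x with
  | zero => simp
  | succ n ih =>
    rw [iteratedDeriv_succ']
    have h1 : deriv (fun y : ℂ => y ^ (n + 1)) = fun y : ℂ => (n + 1 : ℂ) * y ^ n := by
      funext y
      simp [deriv_pow]
    have hpow : ContDiff ℂ (n : ℕ∞) (fun y : ℂ => y ^ n) := contDiff_id.pow n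
    rw [h1, my_iteratedDeriv_cmul _ _ hpow, ih]
    push_cast [Nat.factorial_succ]
    ring

/-- There is no entire function `f : ℂ → ℂ` with
`α f(α y) + c λ m y^(m-1) = α^m f(y)` for all `y`, where `m ≥ 2` and
`α, c, λ` are nonzero with `|α| < 1`. -/
theorem no_entire_solution (m : ℕ) (hm : 2 ≤ m) (α c l : ℂ)
    (hα : α ≠ 0) (hc : c ≠ 0) (hl : l ≠ 0) (hαlt : ‖α‖ < 1) :
    ¬ ∃ f : ℂ → ℂ, Differentiable ℂ f ∧
      ∀ y : ℂ, α * f (α * y) + c * l * (m : ℂ) * y ^ (m - 1) = α ^ m * f y := by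
  rintro ⟨f, hf, hfe⟩
  set n := m - 1 with hn
  have hcd : ContDiff ℂ n f := hf.contDiff.of_le le_top
  have hcd2 : ContDiff ℂ n (fun y => f (α * y)) :=
    hcd.comp (contDiff_const.mul contDiff_id)
  have hkey : iteratedDeriv n (fun y => α * f (α * y) + c * l * (m : ℂ) * y ^ n) 0
      = iteratedDeriv n (fun y => α ^ m * f y) 0 := by
    congr 1
    funext y
    exact hfe y
  have hpow : ContDiff ℂ (n : ℕ∞) (fun y : ℂ => y ^ n) := contDiff_id.pow n
  have ha1 : ContDiff ℂ (n : ℕ∞) (fun y : ℂ => α * f (α * y)) := contDiff_const.mul hcd2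
  have ha2 : ContDiff ℂ (n : ℕ∞) (fun y : ℂ => c * l * (m : ℂ) * y ^ n) :=
    contDiff_const.mul hpow
  rw [my_iteratedDeriv_add 0 ha1 ha2,
      my_iteratedDeriv_cmul _ _ hcd2,
      my_iteratedDeriv_cmul _ _ hpow,
      my_iteratedDeriv_pow,
      my_iteratedDeriv_cmul _ _ hcd,
      iteratedDeriv_comp_const_mul hcd α] at hkey
  have hαm : α * (α ^ n * iteratedDeriv n f (α * 0)) = α ^ m * iteratedDeriv n f 0 := by
    rw [mul_zero, ← mul_assoc, ← pow_succ']
    congr 2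
    omega
  rw [hαm] at hkey
  have h0 : c * l * (m : ℂ) * (Nat.factorial n : ℂ) = 0 := by linear_combination hkey
  have : (m : ℂ) ≠ 0 := Nat.cast_ne_zero.mpr (by omega)
  have : (Nat.factorial n : ℂ) ≠ 0 := Nat.cast_ne_zero.mpr (Nat.factorial_ne_zero n)
  simp_all [mul_eq_zero]
end

section
/- Let $T(x,y) = (\alpha x, \beta y)$ on $\mathbb{C}^2$ with $0 < |\alpha| \le |\beta| < 1$, and let $\Gamma \subseteq (\mathbb{C}^*)^2$ be a subgroup containing $(\alpha, \beta)$ with finite index, acting freely on $\mathbb{C}^2 \setminus \{0\}$. Then $\Gamma \cong \mathbb{Z} \oplus \mathbb{Z}/m\mathbb{Z}$ for some $m \ge 1$: $\Gamma$ is generated by an element of infinite order together with a torsion element $(\lambda, \mu)$ where $\lambda$ and $\mu$ are primitive $m$-th roots of unity. -/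
set_option maxHeartbeats 1000000

private noncomputable def philog (g : ℂˣ × ℂˣ) : ℝ := Real.log ‖((g.1 : ℂ))‖

private lemma philog_mul (g h : ℂˣ × ℂˣ) : philog (g * h) = philog g + philog h := by
  simp only [philog, Prod.fst_mul, Units.val_mul, norm_mul]
  exact Real.log_mul (norm_ne_zero_iff.mpr g.1.ne_zero) (norm_ne_zero_iff.mpr h.1.ne_zero)

private lemma philog_one : philog 1 = 0 := by simp [philog]

private lemma philog_zpow (g : ℂˣ × ℂˣ) (k : ℤ) : philog (g ^ k) = k * philog g := by
  show Real.log ‖((g.1 ^ k : ℂˣ) : ℂ)‖ = k * _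
  rw [Units.val_zpow_eq_zpow_val, norm_zpow, Real.log_zpow]; rfl

private lemma philog_npow (g : ℂˣ × ℂˣ) (k : ℕ) : philog (g ^ k) = k * philog g := by
  have := philog_zpow g (k : ℤ)
  rw [zpow_natCast] at this
  simpa using this

private lemma philog_inv (g : ℂˣ × ℂˣ) : philog g⁻¹ = - philog g := by
  have := philog_zpow g (-1)
  simpa using this

/-- Let `T = (α, β) ∈ (ℂ*)²` with `0 < |α| ≤ |β| < 1` and let `Γ ≤ (ℂ*)²` be a subgroup
containing `T` such that the cyclic group generated by `T` has finite index in `Γ`, and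
such that `Γ` acts freely on `ℂ² \ {0}` by coordinatewise multiplication. Then
`Γ ≅ ℤ ⊕ ℤ/mℤ` for some `m ≥ 1`: it is generated by an element of infinite order
together with a torsion element of order `m` both of whose coordinates are primitive
`m`-th roots of unity. -/
theorem hopf_surface_fundamental_group (α β : ℂˣ)
    (h0 : 0 < ‖(α : ℂ)‖)
    (hle : ‖(α : ℂ)‖ ≤ ‖(β : ℂ)‖)
    (h1 : ‖(β : ℂ)‖ < 1)
    (Γ : Subgroup (ℂˣ × ℂˣ)) (hT : (α, β) ∈ Γ)
    (hindex : (Subgroup.zpowers ((α, β) : ℂˣ × ℂˣ)).relIndex Γ ≠ 0)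
    (hfree : ∀ g ∈ Γ, g ≠ 1 → ∀ x y : ℂ, (x, y) ≠ (0, 0) →
      ((g.1 : ℂ) * x, (g.2 : ℂ) * y) ≠ (x, y)) :
    ∃ m : ℕ, 1 ≤ m ∧ Nonempty (Γ ≃* Multiplicative (ℤ × ZMod m)) ∧
      ∃ g t : ℂˣ × ℂˣ, g ∈ Γ ∧ t ∈ Γ ∧
        (∀ k : ℤ, k ≠ 0 → g ^ k ≠ 1) ∧ orderOf t = m ∧
        IsPrimitiveRoot ((t.1 : ℂ)) m ∧ IsPrimitiveRoot ((t.2 : ℂ)) m ∧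
        Subgroup.closure {g, t} = Γ := by
  classical
  have hα1 : ‖(α : ℂ)‖ < 1 := lt_of_le_of_lt hle h1
  set L : ℝ := Real.log ‖(α : ℂ)‖ with hLdef
  have hL : L < 0 := Real.log_neg h0 hα1
  have hLne : L ≠ 0 := ne_of_lt hL
  set n : ℕ := (Subgroup.zpowers ((α, β) : ℂˣ × ℂˣ)).relIndex Γ with hndef
  have hn : n ≠ 0 := hindex
  have hnR : (n : ℝ) ≠ 0 := Nat.cast_ne_zero.mpr hn
  -- injectivity of the first projection on Γ
  have hfst : ∀ g : ℂˣ × ℂˣ, g ∈ Γ → g.1 = 1 → g = 1 := by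
    intro g hg hg1
    by_contra hne
    exact hfree g hg hne 1 0 (by simp) (by simp [hg1])
  have hsnd : ∀ g : ℂˣ × ℂˣ, g ∈ Γ → g.2 = 1 → g = 1 := by
    intro g hg hg2
    by_contra hne
    exact hfree g hg hne 0 1 (by simp) (by simp [hg2])
  have hfstinj : ∀ g ∈ Γ, ∀ h ∈ Γ, g.1 = h.1 → g = h := by
    intro g hg h hh he
    have h1' : (g * h⁻¹).1 = 1 := by
      simp [Prod.fst_mul, he]
    have := hfst (g * h⁻¹) (Γ.mul_mem hg (Γ.inv_mem hh)) h1'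
    exact mul_inv_eq_one.mp this
  -- every element of Γ raised to the n-th power lies in zpowers (α, β)
  have hpow : ∀ g ∈ Γ, ∃ j : ℤ, g ^ n = ((α, β) : ℂˣ × ℂˣ) ^ j := by
    intro g hg
    have hmem := Subgroup.pow_index_mem
      ((Subgroup.zpowers ((α, β) : ℂˣ × ℂˣ)).subgroupOf Γ) (⟨g, hg⟩ : Γ)
    rw [Subgroup.mem_subgroupOf] at hmem
    obtain ⟨j, hj⟩ := Subgroup.mem_zpowers_iff.mp hmem
    refine ⟨j, ?_⟩
    rw [hj, Subgroup.coe_pow]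
    rfl
  have hphiab : philog ((α, β) : ℂˣ × ℂˣ) = L := rfl
  have hφmem : ∀ g ∈ Γ, ∃ j : ℤ, (n : ℝ) * philog g = (j : ℝ) * L := by
    intro g hg
    obtain ⟨j, hj⟩ := hpow g hg
    refine ⟨j, ?_⟩
    have := congrArg philog hj
    rw [philog_npow, philog_zpow, hphiab] at this
    exact this
  -- torsion criterion
  have htors : ∀ g ∈ Γ, (philog g = 0 ↔ g ^ n = 1) := by
    intro g hg
    obtain ⟨j, hj⟩ := hpow g hg
    constructor
    · intro h0'
      have h2 : (n : ℝ) * philog g = (j : ℝ) * L := by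
        have := congrArg philog hj
        rw [philog_npow, philog_zpow, hphiab] at this
        exact this
      rw [h0', mul_zero] at h2
      have hj0 : (j : ℝ) = 0 := by
        rcases mul_eq_zero.mp h2.symm with h | h
        · exact h
        · exact absurd h hLne
      have : j = 0 := by exact_mod_cast hj0
      rw [hj, this, zpow_zero]
    · intro h1'
      have := congrArg philog h1'
      rw [philog_npow, philog_one] at this
      rcases mul_eq_zero.mp this with h | h
      · exact absurd h hnR
      · exact h
  -- the image subgroup of ℤ
  let K : AddSubgroup ℤ :=
    { carrier := {k : ℤ | ∃ g ∈ Γ, (n : ℝ) * philog g = (k : ℝ) * L}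
      zero_mem' := ⟨1, Γ.one_mem, by simp [philog_one]⟩
      add_mem' := by
        rintro a b ⟨g, hg, hga⟩ ⟨g', hg', hgb⟩
        refine ⟨g * g', Γ.mul_mem hg hg', ?_⟩
        rw [philog_mul, mul_add, hga, hgb]
        push_cast
        ring
      neg_mem' := by
        rintro a ⟨g, hg, hga⟩
        refine ⟨g⁻¹, Γ.inv_mem hg, ?_⟩
        rw [philog_inv]
        push_cast
        linarith }
  obtain ⟨k₀, hK⟩ := Int.subgroup_cyclic K
  have hnK : (n : ℤ) ∈ K := ⟨(α, β), hT, by rw [hphiab]; push_cast; ring⟩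
  have hk₀ne : k₀ ≠ 0 := by
    intro h
    rw [hK, h] at hnK
    obtain ⟨c, hc⟩ := AddSubgroup.mem_closure_singleton.mp hnK
    simp at hc
    exact hn (by exact_mod_cast hc.symm)
  have hk₀K : k₀ ∈ K := by
    rw [hK]
    exact AddSubgroup.mem_closure_singleton.mpr ⟨1, one_smul _ _⟩
  obtain ⟨g₀, hg₀Γ, hg₀⟩ := hk₀K
  have hφg₀ : philog g₀ ≠ 0 := by
    intro h
    rw [h, mul_zero] at hg₀
    rcases mul_eq_zero.mp hg₀.symm with h' | h'
    · exact hk₀ne (by exact_mod_cast h')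
    · exact hLne h'
  -- the torsion subgroup
  let T : Subgroup (ℂˣ × ℂˣ) :=
    { carrier := {g | g ∈ Γ ∧ g ^ n = 1}
      one_mem' := ⟨Γ.one_mem, one_pow n⟩
      mul_mem' := by
        rintro a b ⟨ha, ha1⟩ ⟨hb, hb1⟩
        exact ⟨Γ.mul_mem ha hb, by rw [mul_pow, ha1, hb1, mul_one]⟩
      inv_mem' := by
        rintro a ⟨ha, ha1⟩
        exact ⟨Γ.inv_mem ha, by rw [inv_pow, ha1, inv_one]⟩ }
  have hTmem : ∀ g, g ∈ T ↔ g ∈ Γ ∧ g ^ n = 1 := fun g => Iff.rfl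
  haveI : NeZero n := ⟨hn⟩
  haveI : Finite T := by
    have hinj : Function.Injective (fun g : T =>
        (⟨g.1.1, by
          rw [mem_rootsOfUnity]
          exact congrArg Prod.fst g.2.2⟩ : rootsOfUnity n ℂ)) := by
      intro a b hab
      have h1' : a.1.1 = b.1.1 := congrArg (fun x : rootsOfUnity n ℂ => (x : ℂˣ)) hab
      exact Subtype.ext (hfstinj a.1 a.2.1 b.1 b.2.1 h1')
    exact Finite.of_injective _ hinj
  haveI : IsCyclic T := by
    apply isCyclic_of_subgroup_isDomain (R := ℂ)
      ((Units.coeHom ℂ).comp ((MonoidHom.fst ℂˣ ℂˣ).comp T.subtype))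
    intro a b hab
    have : a.1.1 = b.1.1 := Units.ext hab
    exact Subtype.ext (hfstinj a.1 a.2.1 b.1 b.2.1 this)
  obtain ⟨t₀, ht₀⟩ := IsCyclic.exists_generator (α := T)
  set t : ℂˣ × ℂˣ := (t₀ : ℂˣ × ℂˣ) with htdef
  have htΓ : t ∈ Γ := t₀.2.1
  have htn : t ^ n = 1 := t₀.2.2
  set m : ℕ := orderOf t with hmdef
  have hmdvd : m ∣ n := orderOf_dvd_of_pow_eq_one htn
  have hm0 : m ≠ 0 := by
    intro h
    rw [h] at hmdvd
    exact hn (Nat.eq_zero_of_zero_dvd hmdvd)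
  have hm1 : 1 ≤ m := Nat.one_le_iff_ne_zero.mpr hm0
  have hφt : philog t = 0 := (htors t htΓ).mpr htn
  -- key : a power of t with trivial first coordinate is trivial
  have hkey1 : ∀ l : ℕ, t.1 ^ l = 1 → t ^ l = 1 := by
    intro l hl
    exact hfst (t ^ l) (Γ.pow_mem htΓ l) hl
  have hkey2 : ∀ l : ℕ, t.2 ^ l = 1 → t ^ l = 1 := by
    intro l hl
    exact hsnd (t ^ l) (Γ.pow_mem htΓ l) hl
  have htm : t ^ m = 1 := pow_orderOf_eq_one t
  have hprim1 : IsPrimitiveRoot ((t.1 : ℂ)) m := by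
    constructor
    · have h' : t.1 ^ m = 1 := congrArg Prod.fst htm
      rw [← Units.val_pow_eq_pow_val, h', Units.val_one]
    · intro l hl
      have hu : t.1 ^ l = 1 := Units.ext (by push_cast; exact hl)
      exact orderOf_dvd_of_pow_eq_one (hkey1 l hu)
  have hprim2 : IsPrimitiveRoot ((t.2 : ℂ)) m := by
    constructor
    · have h' : t.2 ^ m = 1 := congrArg Prod.snd htm
      rw [← Units.val_pow_eq_pow_val, h', Units.val_one]
    · intro l hl
      have hu : t.2 ^ l = 1 := Units.ext (by push_cast; exact hl)
      exact orderOf_dvd_of_pow_eq_one (hkey2 l hu)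
  -- decomposition of elements of Γ
  have hdecomp : ∀ g ∈ Γ, ∃ k j : ℤ, g = g₀ ^ k * t ^ j := by
    intro g hg
    obtain ⟨j₁, hj₁⟩ := hφmem g hg
    have hj₁K : j₁ ∈ K := ⟨g, hg, hj₁⟩
    rw [hK] at hj₁K
    obtain ⟨k, hk⟩ := AddSubgroup.mem_closure_singleton.mp hj₁K
    refine ⟨k, ?_⟩
    have hmem : g * g₀ ^ (-k) ∈ Γ := Γ.mul_mem hg (Γ.zpow_mem hg₀Γ _)
    have hz : philog (g * g₀ ^ (-k)) = 0 := by
      have h2 : (n : ℝ) * philog (g * g₀ ^ (-k)) = 0 := by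
        rw [philog_mul, philog_zpow, mul_add, hj₁]
        have h3 : (n : ℝ) * (((-k : ℤ) : ℝ) * philog g₀) = ((-k : ℤ) : ℝ) * ((n : ℝ) * philog g₀) := by
          ring
        rw [h3, hg₀]
        rw [smul_eq_mul] at hk
        rw [← hk]
        push_cast
        ring
      rcases mul_eq_zero.mp h2 with h | h
      · exact absurd h hnR
      · exact h
    have hTm : g * g₀ ^ (-k) ∈ T := ⟨hmem, (htors _ hmem).mp hz⟩
    obtain ⟨j, hj⟩ := Subgroup.mem_zpowers_iff.mp (ht₀ ⟨_, hTm⟩)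
    refine ⟨j, ?_⟩
    have ht' : t ^ j = g * g₀ ^ (-k) := by
      have := congrArg (fun x : T => ((x : ℂˣ × ℂˣ))) hj
      simpa using this
    rw [ht', mul_comm (g₀ ^ k), mul_assoc, ← zpow_add, neg_add_cancel, zpow_zero, mul_one]
  -- infinite order of g₀
  have hg₀inf : ∀ k : ℤ, k ≠ 0 → g₀ ^ k ≠ 1 := by
    intro k hk hcontra
    have := congrArg philog hcontra
    rw [philog_zpow, philog_one] at this
    rcases mul_eq_zero.mp this with h | h
    · exact hk (by exact_mod_cast h)
    · exact hφg₀ h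
  -- closure
  have hclosure : Subgroup.closure {g₀, t} = Γ := by
    apply le_antisymm
    · rw [Subgroup.closure_le]
      rintro x (rfl | rfl)
      · exact hg₀Γ
      · exact htΓ
    · intro g hg
      obtain ⟨k, j, hkj⟩ := hdecomp g hg
      rw [hkj]
      have h₁ : g₀ ∈ Subgroup.closure ({g₀, t} : Set (ℂˣ × ℂˣ)) :=
        Subgroup.subset_closure (by simp)
      have h₂ : t ∈ Subgroup.closure ({g₀, t} : Set (ℂˣ × ℂˣ)) :=
        Subgroup.subset_closure (by simp)
      exact Subgroup.mul_mem _ (Subgroup.zpow_mem _ h₁ k) (Subgroup.zpow_mem _ h₂ j)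
  -- the isomorphism
  haveI : NeZero m := ⟨hm0⟩
  let gg : Γ := ⟨g₀, hg₀Γ⟩
  let t' : Γ := ⟨t, htΓ⟩
  have hordt' : orderOf t' = m := by
    rw [← orderOf_injective Γ.subtype Γ.subtype_injective t']
    rfl
  have hcoe : ∀ (k : ℤ) (v : ℕ), ((gg ^ k * t' ^ v : Γ) : ℂˣ × ℂˣ) = g₀ ^ k * t ^ v := by
    intro k v
    rw [Subgroup.coe_mul, SubgroupClass.coe_zpow, Subgroup.coe_pow]
  have hF : ∀ x y : Multiplicative (ℤ × ZMod m),
      gg ^ (Multiplicative.toAdd (x * y)).1 * t' ^ ((Multiplicative.toAdd (x * y)).2.val) =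
      (gg ^ (Multiplicative.toAdd x).1 * t' ^ ((Multiplicative.toAdd x).2.val)) *
      (gg ^ (Multiplicative.toAdd y).1 * t' ^ ((Multiplicative.toAdd y).2.val)) := by
    intro x y
    have h1' : (Multiplicative.toAdd (x * y)).1
        = (Multiplicative.toAdd x).1 + (Multiplicative.toAdd y).1 := rfl
    have h2' : (Multiplicative.toAdd (x * y)).2
        = (Multiplicative.toAdd x).2 + (Multiplicative.toAdd y).2 := rfl
    rw [h1', h2', ZMod.val_add]
    have hpm := pow_mod_orderOf t' ((Multiplicative.toAdd x).2.val + (Multiplicative.toAdd y).2.val)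
    rw [hordt'] at hpm
    rw [hpm, pow_add, zpow_add]
    exact mul_mul_mul_comm _ _ _ _
  let F : Multiplicative (ℤ × ZMod m) →* Γ := MonoidHom.mk'
    (fun x => gg ^ (Multiplicative.toAdd x).1 * t' ^ ((Multiplicative.toAdd x).2.val)) hF
  have hFapp : ∀ x : Multiplicative (ℤ × ZMod m),
      F x = gg ^ (Multiplicative.toAdd x).1 * t' ^ ((Multiplicative.toAdd x).2.val) :=
    fun _ => rfl
  have hFbij : Function.Bijective F := by
    constructor
    · rw [injective_iff_map_eq_one]
      intro x hx
      rw [hFapp x] at hx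
      have hx' : g₀ ^ (Multiplicative.toAdd x).1 * t ^ ((Multiplicative.toAdd x).2.val) = 1 := by
        have h := congrArg (fun z : Γ => (z : ℂˣ × ℂˣ)) hx
        simpa [hcoe] using h
      have hphi : ((Multiplicative.toAdd x).1 : ℝ) * philog g₀ = 0 := by
        have h := congrArg philog hx'
        rw [philog_mul, philog_zpow, philog_npow, hφt, philog_one, mul_zero, add_zero] at h
        exact h
      have hk0 : (Multiplicative.toAdd x).1 = 0 := by
        rcases mul_eq_zero.mp hphi with h | h
        · exact_mod_cast h
        · exact absurd h hφg₀
      have htj : t ^ ((Multiplicative.toAdd x).2.val) = 1 := by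
        rw [hk0, zpow_zero, one_mul] at hx'
        exact hx'
      have hj0 : (Multiplicative.toAdd x).2 = 0 := by
        have hdvd : m ∣ (Multiplicative.toAdd x).2.val := orderOf_dvd_of_pow_eq_one htj
        have hlt := ZMod.val_lt (Multiplicative.toAdd x).2
        have hv0 : (Multiplicative.toAdd x).2.val = 0 := Nat.eq_zero_of_dvd_of_lt hdvd hlt
        exact (ZMod.val_eq_zero _).mp hv0
      apply Multiplicative.toAdd.injective
      rw [Prod.ext_iff]
      exact ⟨hk0, hj0⟩
    · intro x
      obtain ⟨k, j, hkj⟩ := hdecomp x.1 x.2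
      refine ⟨Multiplicative.ofAdd (k, (j : ZMod m)), ?_⟩
      apply Subtype.ext
      rw [hFapp, hcoe, hkj]
      congr 1
      have hmodeq : ((((j : ZMod m)).val : ℤ)) ≡ j [ZMOD (m : ℕ)] := by
        rw [ZMod.val_intCast]
        exact Int.emod_emod_of_dvd j dvd_rfl
      rw [← zpow_natCast]
      exact zpow_eq_zpow_iff_modEq.mpr hmodeq
  refine ⟨m, hm1, ⟨(MulEquiv.ofBijective F hFbij).symm⟩, g₀, t, hg₀Γ, htΓ, hg₀inf,
    rfl, hprim1, hprim2, hclosure⟩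
end
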